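/- For every 0 ≤ i ≤ r−1, every x ∈ F, and every 0 ≤ b < 2^i, one has W_i(x + ω_b) = W_i(x); that is, W_i is invariant under shifting its argument by any element of the span of v_0, …, v_{i−1}. -/

import Mathlib

open Polynomial Finset

attribute [local instance] ZMod.algebra

/-- `ω_i = Σ_{j<r} i_j · v_j`, where `i_j` are the binary digits of `i`. -/
noncomputable def omegaF {F : Type*} [Field F] {r : ℕ} (v : Fin r → F) (i : ℕ) : F :=
  ∑ j : Fin r, if Nat.testBit i (j : ℕ) then v j else 0

/-- The subspace vanishing polynomial `W_j(X) = ∏_{i=0}^{2^j-1} (X - ω_i)`. -/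
noncomputable def Wpoly {F : Type*} [Field F] {r : ℕ} (v : Fin r → F) (j : ℕ) : Polynomial F :=
  ∏ i ∈ Finset.range (2 ^ j), (Polynomial.X - Polynomial.C (omegaF v i))

/-- The basis polynomial `X_i(X) = ∏_{j<r} (W_j(X)/W_j(ω_{2^j}))^{i_j}`. -/
noncomputable def Xpoly {F : Type*} [Field F] {r : ℕ} (v : Fin r → F) (i : ℕ) : Polynomial F :=
  ∏ j ∈ Finset.range r,
    if Nat.testBit i j then
      Polynomial.C (((Wpoly v j).eval (omegaF v (2 ^ j)))⁻¹) * Wpoly v j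
    else 1

/-- The recursively defined polynomials `Δ_i^m`:
`Δ_t^m = C (d m)` and `Δ_i^m = Δ_{i+1}^m + (W_i/W_i(ω_{2^i})) · Δ_{i+1}^{m+2^i}` for `i < t`. -/
noncomputable def Delta {F : Type*} [Field F] {r : ℕ} (v : Fin r → F) (d : ℕ → F)
    (t i m : ℕ) : Polynomial F :=
  if i < t then
    Delta v d t (i + 1) m +
      Polynomial.C (((Wpoly v i).eval (omegaF v (2 ^ i)))⁻¹) * Wpoly v i *
        Delta v d t (i + 1) (m + 2 ^ i)
  else Polynomial.C (d m)
termination_by t - i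
decreasing_by all_goals omega

/-- The constant `W'_l = (∏_{j=1}^{2^l-1} ω_j) / W_l(ω_{2^l})`. -/
noncomputable def Wd {F : Type*} [Field F] {r : ℕ} (v : Fin r → F) (l : ℕ) : F :=
  (∏ j ∈ Finset.Ico 1 (2 ^ l), omegaF v j) / (Wpoly v l).eval (omegaF v (2 ^ l))

/-- For every `0 ≤ i ≤ r-1`, every `x ∈ F` and every `0 ≤ b < 2^i`,
`W_i(x + ω_b) = W_i(x)`. -/
theorem statement4 (r : ℕ) (hr : 1 ≤ r) (F : Type*) [Field F] [Fintype F] [CharP F 2]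
    (hcard : Fintype.card F = 2 ^ r) (v : Fin r → F)
    (hv : LinearIndependent (ZMod 2) v) :
    ∀ i ≤ r - 1, ∀ x : F, ∀ b < 2 ^ i,
      (Wpoly v i).eval (x + omegaF v b) = (Wpoly v i).eval x := by
  have hxor : ∀ a b : ℕ, omegaF v (a ^^^ b) = omegaF v a + omegaF v b := by
    intro a b
    unfold omegaF
    rw [← Finset.sum_add_distrib]
    refine Finset.sum_congr rfl fun j _ => ?_
    rw [Nat.testBit_xor]
    cases ha : Nat.testBit a (j : ℕ) <;> cases hb : Nat.testBit b (j : ℕ) <;>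
      simp [CharTwo.add_self_eq_zero]
  intro i _ x b hb
  simp only [Wpoly, Polynomial.eval_prod, Polynomial.eval_sub, Polynomial.eval_X,
    Polynomial.eval_C]
  refine Finset.prod_nbij (fun c => c ^^^ b) ?_ ?_ ?_ ?_
  · intro c hc
    simp only [Finset.mem_range] at *
    exact Nat.xor_lt_two_pow hc hb
  · intro c _ c' _ h
    simpa using congrArg (· ^^^ b) h
  · intro c hc
    simp only [Finset.coe_range, Set.mem_image, Set.mem_Iio] at *
    exact ⟨c ^^^ b, Nat.xor_lt_two_pow hc hb, by simp [Nat.xor_assoc]⟩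
  · intro c _
    rw [hxor]
    ring_nf
    simp only [CharTwo.sub_eq_add]
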